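/- Consider the IU^{γ*} marginals A^n_i and B^n_i built on a probability space. Then for every i ∈ {1,…,n}: (i) P(A^n_i = 0) = P(a_i = 0) and P(B^n_i = 0) = P(b_i = 0); (ii) P(A^n_i = x) = 0 for every x ∈ (0,∞) with x ≠ X_A, and P(B^n_i = y) = 0 for every y ∈ (0,∞) with y ≠ X_B; (iii) under Assumption (A0), there exists a constant D ∈ (0,1) depending only on w̲, w̄, X_A, X_B such that P(A^n_i = X_A) ≤ D^{n−1} and P(B^n_i = X_B) ≤ D^{n−1}. -/

import Mathlib

open Finset MeasureTheory

/-- Normalized battlefield values: `nv w i = w i / ∑_j w j`. -/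
noncomputable def nv {n : ℕ} (w : Fin n → ℝ) (i : Fin n) : ℝ := w i / ∑ j, w j

/-- The set `Ω_A(γ) = {i : v^A_i / v^B_i > γ}`. -/
noncomputable def OmegaA {n : ℕ} (wA wB : Fin n → ℝ) (γ : ℝ) : Finset (Fin n) :=
  Finset.univ.filter fun i => γ < nv wA i / nv wB i

/-- Equation (2). -/
def Eq2 {n : ℕ} (XA XB : ℝ) (wA wB : Fin n → ℝ) (γ : ℝ) : Prop :=
  XB * γ / XA =
    (γ ^ 2 * ∑ i ∈ OmegaA wA wB γ, (nv wB i) ^ 2 / nv wA i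
        + ∑ i ∈ (OmegaA wA wB γ)ᶜ, nv wA i) /
    (∑ i ∈ OmegaA wA wB γ, nv wB i
        + (γ ^ 2)⁻¹ * ∑ i ∈ (OmegaA wA wB γ)ᶜ, (nv wA i) ^ 2 / nv wB i)

/-- The multiplier λ*_A associated with a solution γ of Equation (2). -/
noncomputable def lamA {n : ℕ} (XB : ℝ) (wA wB : Fin n → ℝ) (γ : ℝ) : ℝ :=
  γ ^ 2 / (2 * XB) * ∑ i ∈ OmegaA wA wB γ, (nv wB i) ^ 2 / nv wA i
    + 1 / (2 * XB) * ∑ i ∈ (OmegaA wA wB γ)ᶜ, nv wA i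

/-- The multiplier λ*_B associated with a solution γ of Equation (2). -/
noncomputable def lamB {n : ℕ} (XA : ℝ) (wA wB : Fin n → ℝ) (γ : ℝ) : ℝ :=
  1 / (2 * XA) * ∑ i ∈ OmegaA wA wB γ, nv wB i
    + 1 / (2 * γ ^ 2 * XA) * ∑ i ∈ (OmegaA wA wB γ)ᶜ, (nv wA i) ^ 2 / nv wB i

/-- The uniform-type CDF `F_{A*_i}`. -/
noncomputable def FAstar {n : ℕ} (XA XB : ℝ) (wA wB : Fin n → ℝ) (γ : ℝ) (i : Fin n)
    (x : ℝ) : ℝ :=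
  if x < 0 then 0
  else if i ∈ OmegaA wA wB γ then
    min (x * lamB XA wA wB γ / nv wB i) 1
  else
    min (1 - nv wA i * lamB XA wA wB γ / (nv wB i * lamA XB wA wB γ)
          + x * lamB XA wA wB γ / nv wB i) 1

/-- The uniform-type CDF `F_{B*_i}`. -/
noncomputable def FBstar {n : ℕ} (XA XB : ℝ) (wA wB : Fin n → ℝ) (γ : ℝ) (i : Fin n)
    (x : ℝ) : ℝ :=
  if x < 0 then 0
  else if i ∈ OmegaA wA wB γ then
    min (1 - nv wB i * lamA XB wA wB γ / (nv wA i * lamB XA wA wB γ)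
          + x * lamA XB wA wB γ / nv wA i) 1
  else
    min (x * lamA XB wA wB γ / nv wA i) 1

/-- The IU^γ* allocation to battlefield `i`: the draw `a i` normalized by the total
draw and scaled by the budget `X` (and `0` if the total draw is `0`). -/
noncomputable def IUalloc {n : ℕ} {Ω : Type*} (X : ℝ) (a : Fin n → Ω → ℝ)
    (i : Fin n) (ω : Ω) : ℝ :=
  if 0 < ∑ j, a j ω then a i ω * X / ∑ j, a j ω else 0


lemma ennreal_eq_zero_of_le (x : ENNReal) (h : ∀ ε : ℝ, 0 < ε → x ≤ ENNReal.ofReal ε) :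
    x = 0 := by
  by_contra hx
  have hfin : x ≠ ⊤ := ne_top_of_le_ne_top ENNReal.ofReal_ne_top (h 1 one_pos)
  have hpos : 0 < x.toReal := ENNReal.toReal_pos hx hfin
  have h2 := h (x.toReal / 2) (by linarith)
  have h3 : ENNReal.ofReal (x.toReal / 2) < ENNReal.ofReal x.toReal :=
    (ENNReal.ofReal_lt_ofReal_iff hpos).mpr (by linarith)
  rw [ENNReal.ofReal_toReal hfin] at h3
  exact absurd (lt_of_le_of_lt h2 h3) (lt_irrefl x)

lemma min_sub_min_le (c L s t : ℝ) (hL : 0 ≤ L) (hst : s ≤ t) :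
    min (c + t * L) 1 - min (c + s * L) 1 ≤ (t - s) * L := by
  have h1 : c + s * L ≤ c + t * L := by nlinarith
  rcases le_total (c + t * L) 1 with h | h
  · rw [min_eq_left h, min_eq_left (le_trans h1 h)]; nlinarith
  · rw [min_eq_right h]
    rcases le_total (c + s * L) 1 with h' | h'
    · rw [min_eq_left h']; nlinarith
    · rw [min_eq_right h']; nlinarith

/-- no atoms at positive points, for r.v. with Lipschitz-on-positives CDF -/
lemma atom_zero {Ω : Type} [MeasurableSpace Ω] (P : Measure Ω) [IsProbabilityMeasure P]
    (X : Ω → ℝ) (hX : Measurable X) (G : ℝ → ℝ)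
    (hG : ∀ x, P {ω | X ω ≤ x} = ENNReal.ofReal (G x))
    (L : ℝ) (hL : 0 ≤ L)
    (hLip : ∀ s t : ℝ, 0 < s → s ≤ t → G t - G s ≤ (t - s) * L)
    (t : ℝ) (ht : 0 < t) : P {ω | X ω = t} = 0 := by
  have key : ∀ δ : ℝ, 0 < δ → δ < t → P {ω | X ω = t} ≤ ENNReal.ofReal (δ * L) := by
    intro δ hδ hδt
    have hd : Disjoint {ω | X ω = t} {ω | X ω ≤ t - δ} := by
      rw [Set.disjoint_left]
      intro ω h1 h2
      simp only [Set.mem_setOf_eq] at h1 h2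
      linarith
    have hm : MeasurableSet {ω | X ω ≤ t - δ} := hX measurableSet_Iic
    have hsub : {ω | X ω = t} ∪ {ω | X ω ≤ t - δ} ⊆ {ω | X ω ≤ t} := by
      intro ω hω
      rcases hω with h | h <;> simp only [Set.mem_setOf_eq] at *
      · exact le_of_eq h
      · linarith
    have h1 : P {ω | X ω = t} + P {ω | X ω ≤ t - δ} ≤ P {ω | X ω ≤ t} := by
      rw [← measure_union hd hm]
      exact measure_mono hsub
    rw [hG, hG] at h1
    have h2 : P {ω | X ω = t} ≤ ENNReal.ofReal (G t) - ENNReal.ofReal (G (t - δ)) :=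
      ENNReal.le_sub_of_add_le_right ENNReal.ofReal_ne_top h1
    have h4 := hLip (t - δ) t (by linarith) (by linarith)
    have h5 : (t - (t - δ)) * L = δ * L := by ring
    rw [h5] at h4
    refine h2.trans (le_trans ?_ (ENNReal.ofReal_le_ofReal h4))
    rw [tsub_le_iff_right]
    calc ENNReal.ofReal (G t)
        = ENNReal.ofReal ((G t - G (t - δ)) + G (t - δ)) := by ring_nf
      _ ≤ _ := ENNReal.ofReal_add_le
  apply ennreal_eq_zero_of_le
  intro ε hε
  have hLpos : 0 < L + 1 := by linarith
  set δ := min (t / 2) (ε / (L + 1)) with hδdef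
  have hδ : 0 < δ := lt_min (by linarith) (by positivity)
  have hδt : δ < t := lt_of_le_of_lt (min_le_left _ _) (by linarith)
  refine (key δ hδ hδt).trans (ENNReal.ofReal_le_ofReal ?_)
  have : δ ≤ ε / (L + 1) := min_le_right _ _
  calc δ * L ≤ (ε / (L + 1)) * L := by nlinarith
    _ ≤ ε := by rw [div_mul_eq_mul_div, div_le_iff₀ hLpos]; nlinarith

lemma cdf_neg_zero {Ω : Type} [MeasurableSpace Ω] (P : Measure Ω)
    (X : Ω → ℝ) (h : ∀ x : ℝ, x < 0 → P {ω | X ω ≤ x} = 0) :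
    P {ω | X ω < 0} = 0 := by
  have hsub : {ω | X ω < 0} ⊆ ⋃ n : ℕ, {ω | X ω ≤ -(1 / (n + 1))} := by
    intro ω hω
    simp only [Set.mem_setOf_eq] at hω
    obtain ⟨n, hn⟩ := exists_nat_one_div_lt (show (0:ℝ) < -X ω by linarith)
    exact Set.mem_iUnion.mpr ⟨n, by simp only [Set.mem_setOf_eq]; push_cast at hn ⊢; linarith⟩
  refine measure_mono_null hsub (measure_iUnion_null fun n => h _ ?_)
  have : (0:ℝ) < 1 / (n + 1) := by positivity
  linarith

lemma iIndepFun_reindex {ι κ Ω β : Type*} [MeasurableSpace Ω] [mβ : MeasurableSpace β]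
    {μ : Measure Ω} (f : κ → Ω → β) (g : ι ↪ κ)
    (h : ProbabilityTheory.iIndepFun f μ) :
    ProbabilityTheory.iIndepFun (fun i => f (g i)) μ := by
  classical
  rw [ProbabilityTheory.iIndepFun_iff] at h ⊢
  intro s f' hmeas
  set F : κ → Set Ω := fun k => if hk : ∃ i ∈ s, g i = k then f' hk.choose else Set.univ with hF
  have hFg : ∀ i ∈ s, F (g i) = f' i := by
    intro i hi
    have hk : ∃ i' ∈ s, g i' = g i := ⟨i, hi, rfl⟩
    simp only [hF, dif_pos hk]
    obtain ⟨hi', heq⟩ := hk.choose_spec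
    rw [g.injective heq]
  have hmeas' : ∀ k ∈ s.map g, MeasurableSet[mβ.comap (f k)] (F k) := by
    intro k hk
    obtain ⟨i, hi, rfl⟩ := Finset.mem_map.mp hk
    rw [hFg i hi]
    exact hmeas i hi
  have := h (s.map g) hmeas'
  have hInter : (⋂ k ∈ s.map g, F k) = ⋂ i ∈ s, f' i := by
    ext ω
    simp only [Set.mem_iInter, Finset.mem_map]
    constructor
    · intro hω i hi
      rw [← hFg i hi]; exact hω (g i) ⟨i, hi, rfl⟩
    · rintro hω k ⟨i, hi, rfl⟩
      rw [hFg i hi]; exact hω i hi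
  rw [hInter, Finset.prod_map] at this
  rw [this]
  exact Finset.prod_congr rfl fun i hi => congrArg μ (hFg i hi)

lemma pair_eq_mul_zero {Ω : Type} [MeasurableSpace Ω] (P : Measure Ω) [IsProbabilityMeasure P]
    (X Y : Ω → ℝ) (hX : Measurable X) (hY : Measurable Y)
    (hind : ProbabilityTheory.IndepFun Y X P)
    (c : ℝ) (hc : 0 < c)
    (hatom : ∀ t : ℝ, 0 < t → P {ω | X ω = t} = 0) :
    P {ω | X ω = c * Y ω ∧ 0 < Y ω} = 0 := by
  set T : Set (ℝ × ℝ) := {p | p.2 = c * p.1 ∧ 0 < p.1} with hT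
  have hTm : MeasurableSet T := by
    apply MeasurableSet.inter
    · exact measurableSet_eq_fun measurable_snd (measurable_fst.const_mul c)
    · exact measurable_fst measurableSet_Ioi
  have hmap : Measure.map (fun ω => (Y ω, X ω)) P = (P.map Y).prod (P.map X) :=
    (ProbabilityTheory.indepFun_iff_map_prod_eq_prod_map_map hY.aemeasurable
      hX.aemeasurable).mp hind
  have hev : {ω | X ω = c * Y ω ∧ 0 < Y ω} = (fun ω => (Y ω, X ω)) ⁻¹' T := rfl
  rw [hev, ← Measure.map_apply (hY.prodMk hX) hTm, hmap,
    Measure.prod_apply hTm]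
  have hzero : ∀ y : ℝ, (P.map X) (Prod.mk y ⁻¹' T) = 0 := by
    intro y
    by_cases hy : 0 < y
    · have : Prod.mk y ⁻¹' T = {c * y} := by
        ext x
        simp only [hT, Set.mem_preimage, Set.mem_setOf_eq, Set.mem_singleton_iff]
        exact ⟨fun h => h.1, fun h => ⟨h, hy⟩⟩
      rw [this, Measure.map_apply hX (measurableSet_singleton _)]
      exact hatom (c * y) (by positivity)
    · have : Prod.mk y ⁻¹' T = ∅ := by
        ext x
        simp only [hT, Set.mem_preimage, Set.mem_setOf_eq, Set.mem_empty_iff_false,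
          iff_false, not_and]
        exact fun _ => hy
      rw [this]; simp
  simp only [hzero]
  simp

lemma gamma_upper (XA XB γ ρ S1 S2 T1 T2 : ℝ) (hγ : 0 < γ) (hρpos : 0 < ρ)
    (hXA : 0 < XA) (hXB : 0 < XB)
    (hdag : XA * γ * (γ ^ 2 * S1 + S2) = XB * (γ ^ 2 * T1 + T2))
    (hcomp1 : ρ * T1 ≤ S1) (hcomp2 : ρ * T2 ≤ S2)
    (hmix : 0 < ρ * γ ^ 2 * T1 + S2) : γ * (XA * ρ) ≤ XB := by
  by_contra hcon
  push_neg at hcon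
  have e1 : ρ * (XA * γ * (γ ^ 2 * S1 + S2)) = ρ * (XB * (γ ^ 2 * T1 + T2)) := by
    rw [hdag]
  have e2 := mul_le_mul_of_nonneg_left hcomp1
    (le_of_lt (mul_pos (mul_pos hρpos hXA) (pow_pos hγ 3)))
  have e3 := mul_le_mul_of_nonneg_left hcomp2 hXB.le
  have e4 : ρ ^ 2 * XA * γ ^ 3 * T1 + ρ * XA * γ * S2
      ≤ ρ * XB * γ ^ 2 * T1 + XB * S2 := by linarith [e1, e2, e3]
  have e5 : (γ * (XA * ρ) - XB) * (ρ * γ ^ 2 * T1 + S2) ≤ 0 := by linarith [e4]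
  linarith [mul_pos (show (0:ℝ) < γ * (XA * ρ) - XB by linarith) hmix, e5]

lemma gamma_lower (XA XB γ ρ S1 S2 T1 T2 : ℝ) (hγ : 0 < γ) (hρpos : 0 < ρ)
    (hXA : 0 < XA) (hXB : 0 < XB) (hXAB : XA ≤ XB)
    (hdag : XA * γ * (γ ^ 2 * S1 + S2) = XB * (γ ^ 2 * T1 + T2))
    (hcomp3 : ρ * S1 ≤ T1) (hcomp4 : ρ * S2 ≤ T2)
    (hmix2 : 0 < γ ^ 2 * T1 + ρ * S2) : ρ * XA ≤ γ * XB := by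
  by_contra hcon
  push_neg at hcon
  have hXX : XA * XA ≤ XB * XB := mul_self_le_mul_self hXA.le hXAB
  have hXAγ : XA * γ < ρ * XB := by
    nlinarith [mul_lt_mul_of_pos_left hcon hXA,
      mul_le_mul_of_nonneg_left hXX hρpos.le, hXB]
  have e1 : ρ * (XA * γ * (γ ^ 2 * S1 + S2)) = ρ * (XB * (γ ^ 2 * T1 + T2)) := by
    rw [hdag]
  have e2 := mul_le_mul_of_nonneg_left hcomp3
    (le_of_lt (mul_pos hXA (pow_pos hγ 3)))
  have e3 := mul_le_mul_of_nonneg_left hcomp4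
    (le_of_lt (mul_pos hρpos hXB))
  have e4 : ρ * XB * γ ^ 2 * T1 + ρ ^ 2 * XB * S2
      ≤ XA * γ ^ 3 * T1 + ρ * XA * γ * S2 := by linarith [e1, e2, e3]
  have e5 : (ρ * XB - XA * γ) * (γ ^ 2 * T1 + ρ * S2) ≤ 0 := by linarith [e4]
  linarith [mul_pos (show (0:ℝ) < ρ * XB - XA * γ by linarith) hmix2, e5]

lemma ratio_bound (wlo whi w1 w2 SA SB N : ℝ) (hwlo : 0 < wlo) (hwhi : 0 < whi)
    (h1 : wlo ≤ w1) (h2 : w2 ≤ whi) (hw2 : 0 < w2) (hSA : 0 < SA) (hSB : 0 < SB)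
    (hSAle : SA ≤ N * whi) (hSBge : N * wlo ≤ SB) :
    wlo ^ 2 / whi ^ 2 * (w2 / SB) ≤ w1 / SA := by
  have hN : 0 < N := by
    by_contra hN
    push_neg at hN
    nlinarith
  have ha : w2 * SA ≤ whi * (N * whi) := mul_le_mul h2 hSAle hSA.le hwhi.le
  have hb : wlo * (N * wlo) ≤ w1 * SB := mul_le_mul h1 hSBge (by positivity) (by linarith)
  have ha' := mul_le_mul_of_nonneg_left ha (sq_nonneg wlo)
  have hb' := mul_le_mul_of_nonneg_left hb (sq_nonneg whi)
  rw [div_mul_div_comm, div_le_div_iff₀ (by positivity) hSA]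
  nlinarith [ha', hb']

lemma compA (ρ u v : ℝ) (hρ : 0 ≤ ρ) (hu : 0 < u) (hv : 0 < v) (h : ρ * u ≤ v) :
    ρ * v ≤ v ^ 2 / u := by
  rw [le_div_iff₀ hu]
  nlinarith [mul_le_mul_of_nonneg_left h hv.le]

lemma compB (ρ u v : ℝ) (hρ : 0 ≤ ρ) (hu : 0 < u) (hv : 0 < v) (h : ρ * u ≤ v) :
    ρ * (u ^ 2 / v) ≤ u := by
  rw [mul_div_assoc', div_le_iff₀ hv]
  nlinarith [mul_le_mul_of_nonneg_left h hu.le]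

lemma zero_bound_A (ρ XA XB γ vA vB : ℝ) (hρ : 0 < ρ) (hXA : 0 < XA) (hXB : 0 < XB)
    (hγ : 0 < γ) (hvA : 0 < vA) (hvB : 0 < vB)
    (hup : γ * (XA * ρ) ≤ XB) (hr : ρ * vB ≤ vA) :
    ρ ^ 2 * XA / XB ≤ vA / (vB * γ) := by
  rw [div_le_div_iff₀ hXB (mul_pos hvB hγ)]
  nlinarith [mul_le_mul hup hr (mul_nonneg hρ.le hvB.le) hXB.le]

lemma zero_bound_B (ρ XA XB γ vA vB : ℝ) (hρ : 0 < ρ) (hXA : 0 < XA) (hXB : 0 < XB)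
    (hγ : 0 < γ) (hvA : 0 < vA) (hvB : 0 < vB)
    (hlo : ρ * XA ≤ γ * XB) (hr : ρ * vA ≤ vB) :
    ρ ^ 2 * XA / XB ≤ vB * γ / vA := by
  rw [div_le_div_iff₀ hXB hvA]
  nlinarith [mul_le_mul hlo hr (mul_nonneg hρ.le hvA.le)
    (le_of_lt (mul_pos hγ hXB))]

set_option maxHeartbeats 2000000 in
/-- Properties of the IU^γ* marginals A^n_i and B^n_i. -/
theorem stmt9 (wlo whi XA XB : ℝ) (hwlo : 0 < wlo) (hw : wlo ≤ whi)
    (hXA : 0 < XA) (hXAB : XA ≤ XB) :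
    ∃ D : ℝ, 0 < D ∧ D < 1 ∧
      ∀ (n : ℕ), 1 ≤ n → ∀ (wA wB : Fin n → ℝ),
        (∀ i, 0 < wA i) → (∀ i, 0 < wB i) →
        ∀ γ : ℝ, 0 < γ → Eq2 XA XB wA wB γ →
        ∀ (Ω : Type) (_ : MeasurableSpace Ω) (P : Measure Ω), IsProbabilityMeasure P →
        ∀ (a b : Fin n → Ω → ℝ),
          (∀ i, Measurable (a i)) → (∀ i, Measurable (b i)) →
          ProbabilityTheory.iIndepFun (Sum.elim a b) P →
          (∀ i x, P {ω | a i ω ≤ x} = ENNReal.ofReal (FAstar XA XB wA wB γ i x)) →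
          (∀ i x, P {ω | b i ω ≤ x} = ENNReal.ofReal (FBstar XA XB wA wB γ i x)) →
        ∀ i : Fin n,
          (P {ω | IUalloc XA a i ω = 0} = P {ω | a i ω = 0} ∧
            P {ω | IUalloc XB b i ω = 0} = P {ω | b i ω = 0}) ∧
          ((∀ x : ℝ, 0 < x → x ≠ XA → P {ω | IUalloc XA a i ω = x} = 0) ∧
            (∀ y : ℝ, 0 < y → y ≠ XB → P {ω | IUalloc XB b i ω = y} = 0)) ∧
          ((∀ j, wlo ≤ wA j ∧ wA j ≤ whi) → (∀ j, wlo ≤ wB j ∧ wB j ≤ whi) →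
            P {ω | IUalloc XA a i ω = XA} ≤ ENNReal.ofReal (D ^ (n - 1)) ∧
            P {ω | IUalloc XB b i ω = XB} ≤ ENNReal.ofReal (D ^ (n - 1))) := by
  have hwhi : 0 < whi := lt_of_lt_of_le hwlo hw
  have hXB : 0 < XB := lt_of_lt_of_le hXA hXAB
  set ρ : ℝ := wlo ^ 2 / whi ^ 2 with hρdef
  have hρpos : 0 < ρ := by positivity
  have hρ1 : ρ ≤ 1 := by
    rw [hρdef, div_le_one (by positivity)]; nlinarith
  set D : ℝ := max (1 - ρ ^ 2 * XA / XB) (1 / 2) with hDdef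
  have hDpos : 0 < D := lt_of_lt_of_le one_half_pos (le_max_right _ _)
  have hD1 : D < 1 := by
    apply max_lt _ (by norm_num)
    have : 0 < ρ ^ 2 * XA / XB := by positivity
    linarith
  refine ⟨D, hDpos, hD1, ?_⟩
  intro n hn wA wB hwA hwB γ hγ heq2 Ω mΩ P hP a b ha hb hindep hFa hFb i
  have hne : (Finset.univ : Finset (Fin n)).Nonempty := ⟨i, Finset.mem_univ i⟩
  have hSA : 0 < ∑ j, wA j := Finset.sum_pos (fun j _ => hwA j) hne
  have hSB : 0 < ∑ j, wB j := Finset.sum_pos (fun j _ => hwB j) hne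
  have hvA : ∀ j, 0 < nv wA j := fun j => div_pos (hwA j) hSA
  have hvB : ∀ j, 0 < nv wB j := fun j => div_pos (hwB j) hSB
  set S1 := ∑ j ∈ OmegaA wA wB γ, (nv wB j) ^ 2 / nv wA j with hS1def
  set S2 := ∑ j ∈ (OmegaA wA wB γ)ᶜ, nv wA j with hS2def
  set T1 := ∑ j ∈ OmegaA wA wB γ, nv wB j with hT1def
  set T2 := ∑ j ∈ (OmegaA wA wB γ)ᶜ, (nv wA j) ^ 2 / nv wB j with hT2def
  have hS1nn : 0 ≤ S1 := Finset.sum_nonneg fun j _ => le_of_lt (by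
    have := hvA j; have := hvB j; positivity)
  have hS2nn : 0 ≤ S2 := Finset.sum_nonneg fun j _ => le_of_lt (hvA j)
  have hT1nn : 0 ≤ T1 := Finset.sum_nonneg fun j _ => le_of_lt (hvB j)
  have hT2nn : 0 ≤ T2 := Finset.sum_nonneg fun j _ => le_of_lt (by
    have := hvA j; have := hvB j; positivity)
  have hcases : (0 < T1 ∧ 0 < S1) ∨ (0 < S2 ∧ 0 < T2) := by
    rcases (OmegaA wA wB γ).eq_empty_or_nonempty with h | h
    · right
      have h' : ((OmegaA wA wB γ)ᶜ : Finset (Fin n)).Nonempty := by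
        rw [h]; simpa using hne
      exact ⟨Finset.sum_pos (fun j _ => hvA j) h',
        Finset.sum_pos (fun j _ => by have := hvA j; have := hvB j; positivity) h'⟩
    · left
      exact ⟨Finset.sum_pos (fun j _ => hvB j) h,
        Finset.sum_pos (fun j _ => by have := hvA j; have := hvB j; positivity) h⟩
  have hlamA_eq : lamA XB wA wB γ = γ ^ 2 / (2 * XB) * S1 + 1 / (2 * XB) * S2 := rfl
  have hlamB_eq : lamB XA wA wB γ = 1 / (2 * XA) * T1 + 1 / (2 * γ ^ 2 * XA) * T2 := rfl
  have hlamApos : 0 < lamA XB wA wB γ := by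
    rw [hlamA_eq]
    rcases hcases with ⟨h1, h2⟩ | ⟨h1, h2⟩
    · exact add_pos_of_pos_of_nonneg (mul_pos (by positivity) h2)
        (mul_nonneg (by positivity) hS2nn)
    · exact add_pos_of_nonneg_of_pos (mul_nonneg (by positivity) hS1nn)
        (mul_pos (by positivity) h1)
  have hlamBpos : 0 < lamB XA wA wB γ := by
    rw [hlamB_eq]
    rcases hcases with ⟨h1, h2⟩ | ⟨h1, h2⟩
    · exact add_pos_of_pos_of_nonneg (mul_pos (by positivity) h1)
        (mul_nonneg (by positivity) hT2nn)
    · exact add_pos_of_nonneg_of_pos (mul_nonneg (by positivity) hT1nn)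
        (mul_pos (by positivity) h2)
  have hnum : γ ^ 2 * S1 + S2 = 2 * XB * lamA XB wA wB γ := by
    rw [hlamA_eq]; field_simp
  have hden : T1 + (γ ^ 2)⁻¹ * T2 = 2 * XA * lamB XA wA wB γ := by
    rw [hlamB_eq]; field_simp
  have hlam : lamA XB wA wB γ = γ * lamB XA wA wB γ := by
    have h2 := heq2
    unfold Eq2 at h2
    rw [← hS1def, ← hS2def, ← hT1def, ← hT2def, hnum, hden] at h2
    rw [div_eq_div_iff (ne_of_gt hXA) (ne_of_gt (by positivity))] at h2
    have h3 : (2 * XA * XB) * (γ * lamB XA wA wB γ) = (2 * XA * XB) * lamA XB wA wB γ := by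
      linear_combination h2
    exact (mul_left_cancel₀ (by positivity) h3).symm
  -- CDF facts
  have hAneg : ∀ j, P {ω | a j ω < 0} = 0 := by
    intro j
    apply cdf_neg_zero
    intro x hx
    rw [hFa j x]
    unfold FAstar
    rw [if_pos hx, ENNReal.ofReal_zero]
  have hBneg : ∀ j, P {ω | b j ω < 0} = 0 := by
    intro j
    apply cdf_neg_zero
    intro x hx
    rw [hFb j x]
    unfold FBstar
    rw [if_pos hx, ENNReal.ofReal_zero]
  have hAatom : ∀ j, ∀ t : ℝ, 0 < t → P {ω | a j ω = t} = 0 := by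
    intro j t ht
    refine atom_zero P (a j) (ha j) _ (hFa j) (lamB XA wA wB γ / nv wB j)
      (div_pos hlamBpos (hvB j)).le ?_ t ht
    intro s t hs hst
    unfold FAstar
    rw [if_neg (not_lt.mpr hs.le), if_neg (not_lt.mpr (by linarith : (0:ℝ) ≤ t))]
    by_cases hj : j ∈ OmegaA wA wB γ
    · rw [if_pos hj, if_pos hj]
      have h := min_sub_min_le 0 (lamB XA wA wB γ / nv wB j) s t
        (div_pos hlamBpos (hvB j)).le hst
      rw [show t * lamB XA wA wB γ / nv wB j
          = 0 + t * (lamB XA wA wB γ / nv wB j) from by ring,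
        show s * lamB XA wA wB γ / nv wB j
          = 0 + s * (lamB XA wA wB γ / nv wB j) from by ring]
      exact h
    · rw [if_neg hj, if_neg hj]
      have h := min_sub_min_le
        (1 - nv wA j * lamB XA wA wB γ / (nv wB j * lamA XB wA wB γ))
        (lamB XA wA wB γ / nv wB j) s t (div_pos hlamBpos (hvB j)).le hst
      rw [show 1 - nv wA j * lamB XA wA wB γ / (nv wB j * lamA XB wA wB γ)
            + t * lamB XA wA wB γ / nv wB j
          = (1 - nv wA j * lamB XA wA wB γ / (nv wB j * lamA XB wA wB γ))
            + t * (lamB XA wA wB γ / nv wB j) from by ring,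
        show 1 - nv wA j * lamB XA wA wB γ / (nv wB j * lamA XB wA wB γ)
            + s * lamB XA wA wB γ / nv wB j
          = (1 - nv wA j * lamB XA wA wB γ / (nv wB j * lamA XB wA wB γ))
            + s * (lamB XA wA wB γ / nv wB j) from by ring]
      exact h
  have hBatom : ∀ j, ∀ t : ℝ, 0 < t → P {ω | b j ω = t} = 0 := by
    intro j t ht
    refine atom_zero P (b j) (hb j) _ (hFb j) (lamA XB wA wB γ / nv wA j)
      (div_pos hlamApos (hvA j)).le ?_ t ht
    intro s t hs hst
    unfold FBstar
    rw [if_neg (not_lt.mpr hs.le), if_neg (not_lt.mpr (by linarith : (0:ℝ) ≤ t))]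
    by_cases hj : j ∈ OmegaA wA wB γ
    · rw [if_pos hj, if_pos hj]
      have h := min_sub_min_le
        (1 - nv wB j * lamA XB wA wB γ / (nv wA j * lamB XA wA wB γ))
        (lamA XB wA wB γ / nv wA j) s t (div_pos hlamApos (hvA j)).le hst
      rw [show 1 - nv wB j * lamA XB wA wB γ / (nv wA j * lamB XA wA wB γ)
            + t * lamA XB wA wB γ / nv wA j
          = (1 - nv wB j * lamA XB wA wB γ / (nv wA j * lamB XA wA wB γ))
            + t * (lamA XB wA wB γ / nv wA j) from by ring,
        show 1 - nv wB j * lamA XB wA wB γ / (nv wA j * lamB XA wA wB γ)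
            + s * lamA XB wA wB γ / nv wA j
          = (1 - nv wB j * lamA XB wA wB γ / (nv wA j * lamB XA wA wB γ))
            + s * (lamA XB wA wB γ / nv wA j) from by ring]
      exact h
    · rw [if_neg hj, if_neg hj]
      have h := min_sub_min_le 0 (lamA XB wA wB γ / nv wA j) s t
        (div_pos hlamApos (hvA j)).le hst
      rw [show t * lamA XB wA wB γ / nv wA j
          = 0 + t * (lamA XB wA wB γ / nv wA j) from by ring,
        show s * lamA XB wA wB γ / nv wA j
          = 0 + s * (lamA XB wA wB γ / nv wA j) from by ring]
      exact h
  have haePosA : ∀ᵐ ω ∂P, ∀ j, 0 ≤ a j ω := by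
    rw [MeasureTheory.ae_all_iff]
    intro j
    have hset : {ω | ¬ (0 ≤ a j ω)} = {ω | a j ω < 0} := by ext ω; simp [not_le]
    rw [ae_iff, hset]
    exact hAneg j
  have haePosB : ∀ᵐ ω ∂P, ∀ j, 0 ≤ b j ω := by
    rw [MeasureTheory.ae_all_iff]
    intro j
    have hset : {ω | ¬ (0 ≤ b j ω)} = {ω | b j ω < 0} := by ext ω; simp [not_le]
    rw [ae_iff, hset]
    exact hBneg j
  have hindA : ProbabilityTheory.iIndepFun a P := by
    have h := iIndepFun_reindex (Sum.elim a b)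
      (Function.Embedding.inl : Fin n ↪ Fin n ⊕ Fin n) hindep
    exact h
  have hindB : ProbabilityTheory.iIndepFun b P := by
    have h := iIndepFun_reindex (Sum.elim a b)
      (Function.Embedding.inr : Fin n ↪ Fin n ⊕ Fin n) hindep
    exact h
  -- claim 1
  have claim1 : ∀ (X : ℝ), 0 < X → ∀ f : Fin n → Ω → ℝ,
      (∀ᵐ ω ∂P, ∀ j, 0 ≤ f j ω) →
      P {ω | IUalloc X f i ω = 0} = P {ω | f i ω = 0} := by
    intro X hX f hfpos
    apply measure_congr
    rw [Filter.eventuallyEq_set]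
    filter_upwards [hfpos] with ω hω
    unfold IUalloc
    constructor
    · intro h
      by_cases hS : 0 < ∑ j, f j ω
      · rw [if_pos hS] at h
        rcases div_eq_zero_iff.mp h with h' | h'
        · rcases mul_eq_zero.mp h' with h'' | h''
          · exact h''
          · exact absurd h'' (ne_of_gt hX)
        · exact absurd h' (ne_of_gt hS)
      · have hS0 : ∑ j, f j ω = 0 :=
          le_antisymm (not_lt.mp hS) (Finset.sum_nonneg fun j _ => hω j)
        have h1 : f i ω ≤ ∑ j, f j ω :=
          Finset.single_le_sum (fun j _ => hω j) (Finset.mem_univ i)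
        linarith [hω i]
    · intro h
      by_cases hS : 0 < ∑ j, f j ω
      · rw [if_pos hS, h, zero_mul, zero_div]
      · rw [if_neg hS]
  -- claim 2
  have claim2 : ∀ (X : ℝ), 0 < X → ∀ f : Fin n → Ω → ℝ,
      (∀ j, Measurable (f j)) →
      ProbabilityTheory.iIndepFun f P →
      (∀ j, ∀ t : ℝ, 0 < t → P {ω | f j ω = t} = 0) →
      (∀ᵐ ω ∂P, ∀ j, 0 ≤ f j ω) →
      ∀ x : ℝ, 0 < x → x ≠ X → P {ω | IUalloc X f i ω = x} = 0 := by
    intro X hX f hfm hfind hfatom hfpos x hx hxX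
    rcases lt_or_gt_of_ne hxX with hlt | hgt
    · -- x < X
      set c := x / (X - x) with hcdef
      have hc : 0 < c := div_pos hx (by linarith)
      set S' := fun ω => ∑ j ∈ Finset.univ.erase i, f j ω with hS'def
      have hS'm : Measurable S' :=
        Finset.measurable_sum _ (fun j _ => hfm j)
      have hind2 : ProbabilityTheory.IndepFun S' (f i) P := by
        have h := hfind.indepFun_finsetSum_of_notMem hfm
          (Finset.notMem_erase i Finset.univ)
        have he : (∑ j ∈ Finset.univ.erase i, f j) = S' := by
          funext ω; rw [hS'def]; simp [Finset.sum_apply]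
        rwa [he] at h
      have hsub : {ω | IUalloc X f i ω = x} ≤ᵐ[P]
          {ω | f i ω = c * S' ω ∧ 0 < S' ω} := by
        filter_upwards [hfpos] with ω hω
        intro hmem
        have hmem' : IUalloc X f i ω = x := hmem
        show f i ω = c * S' ω ∧ 0 < S' ω
        unfold IUalloc at hmem'
        by_cases hS : 0 < ∑ j, f j ω
        · rw [if_pos hS] at hmem'
          have hsum : f i ω + S' ω = ∑ j, f j ω :=
            Finset.add_sum_erase _ (fun j => f j ω) (Finset.mem_univ i)
          have hm : f i ω * X = x * ∑ j, f j ω := (div_eq_iff (ne_of_gt hS)).mp hmem'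
          have hfi : f i ω = c * S' ω := by
            rw [hcdef, div_mul_eq_mul_div,
              eq_div_iff (ne_of_gt (by linarith : (0:ℝ) < X - x))]
            linear_combination hm - x * hsum
          refine ⟨hfi, ?_⟩
          have hS'nn : 0 ≤ S' ω := Finset.sum_nonneg fun j _ => hω j
          rcases lt_or_eq_of_le hS'nn with h' | h'
          · exact h'
          · exfalso
            have hfi0 : f i ω = 0 := by rw [hfi, ← h', mul_zero]
            rw [← hsum, hfi0, ← h'] at hS
            norm_num at hS
        · rw [if_neg hS] at hmem'
          exact absurd hmem'.symm (ne_of_gt hx)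
      refine le_antisymm ?_ (zero_le (a := _))
      calc P {ω | IUalloc X f i ω = x}
          ≤ P {ω | f i ω = c * S' ω ∧ 0 < S' ω} := measure_mono_ae hsub
        _ = 0 := pair_eq_mul_zero P (f i) S' (hfm i) hS'm hind2 c hc (hfatom i)
    · -- X < x
      have hae : ∀ᵐ ω ∂P, ω ∉ {ω | IUalloc X f i ω = x} := by
        filter_upwards [hfpos] with ω hω
        intro hmem
        have h' : IUalloc X f i ω = x := hmem
        unfold IUalloc at h'
        by_cases hS : 0 < ∑ j, f j ω
        · rw [if_pos hS] at h'
          have h1 : f i ω ≤ ∑ j, f j ω :=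
            Finset.single_le_sum (fun j _ => hω j) (Finset.mem_univ i)
          have h2 : f i ω * X / ∑ j, f j ω ≤ X := by
            rw [div_le_iff₀ hS]
            nlinarith [mul_nonneg (sub_nonneg.mpr h1) hX.le]
          rw [h'] at h2
          linarith
        · rw [if_neg hS] at h'
          linarith [h']
      exact measure_eq_zero_iff_ae_notMem.mpr hae
  -- claim 3
  have claim3 : ∀ (X : ℝ), 0 < X → ∀ f : Fin n → Ω → ℝ,
      (∀ j, Measurable (f j)) →
      ProbabilityTheory.iIndepFun f P →
      (∀ᵐ ω ∂P, ∀ j, 0 ≤ f j ω) →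
      (∀ j, P {ω | f j ω = 0} ≤ ENNReal.ofReal D) →
      P {ω | IUalloc X f i ω = X} ≤ ENNReal.ofReal (D ^ (n - 1)) := by
    intro X hX f hfm hfind hfpos hfzero
    have hsub : {ω | IUalloc X f i ω = X} ≤ᵐ[P]
        ⋂ j ∈ Finset.univ.erase i, {ω | f j ω = 0} := by
      filter_upwards [hfpos] with ω hω
      intro hmem
      have hmem' : IUalloc X f i ω = X := hmem
      show ω ∈ ⋂ j ∈ Finset.univ.erase i, {ω | f j ω = 0}
      simp only [Set.mem_iInter, Set.mem_setOf_eq]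
      intro j hj
      unfold IUalloc at hmem'
      by_cases hS : 0 < ∑ k, f k ω
      · rw [if_pos hS] at hmem'
        have h1 : f i ω * X = X * ∑ k, f k ω := (div_eq_iff (ne_of_gt hS)).mp hmem'
        have hfiS : f i ω = ∑ k, f k ω := by
          have h2 : X * f i ω = X * ∑ k, f k ω := by linear_combination h1
          exact mul_left_cancel₀ (ne_of_gt hX) h2
        have hsum : f i ω + (∑ k ∈ Finset.univ.erase i, f k ω) = ∑ k, f k ω :=
          Finset.add_sum_erase _ (fun k => f k ω) (Finset.mem_univ i)
        have hS'0 : ∑ k ∈ Finset.univ.erase i, f k ω = 0 := by linarith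
        exact (Finset.sum_eq_zero_iff_of_nonneg (fun k _ => hω k)).mp hS'0 j hj
      · rw [if_neg hS] at hmem'
        exact absurd hmem'.symm (ne_of_gt hX)
    calc P {ω | IUalloc X f i ω = X}
        ≤ P (⋂ j ∈ Finset.univ.erase i, {ω | f j ω = 0}) := measure_mono_ae hsub
      _ = ∏ j ∈ Finset.univ.erase i, P {ω | f j ω = 0} := by
          apply hfind.meas_biInter
          intro j hj
          exact ⟨{0}, measurableSet_singleton 0, rfl⟩
      _ ≤ ∏ j ∈ Finset.univ.erase i, ENNReal.ofReal D :=
          Finset.prod_le_prod' fun j _ => hfzero j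
      _ = ENNReal.ofReal D ^ (n - 1) := by
          rw [Finset.prod_const, Finset.card_erase_of_mem (Finset.mem_univ i),
            Finset.card_univ, Fintype.card_fin]
      _ = ENNReal.ofReal (D ^ (n - 1)) := (ENNReal.ofReal_pow hDpos.le _).symm
  refine ⟨⟨claim1 XA hXA a haePosA, claim1 XB hXB b haePosB⟩,
    ⟨claim2 XA hXA a ha hindA hAatom haePosA, claim2 XB hXB b hb hindB hBatom haePosB⟩, ?_⟩
  intro hbA hbB
  -- Assumption (A0) bounds
  have hSA_le : ∑ j, wA j ≤ (n : ℝ) * whi := by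
    calc ∑ j, wA j ≤ ∑ _j : Fin n, whi := Finset.sum_le_sum fun j _ => (hbA j).2
      _ = (n : ℝ) * whi := by
        rw [Finset.sum_const, Finset.card_univ, Fintype.card_fin, nsmul_eq_mul]
  have hSA_ge : (n : ℝ) * wlo ≤ ∑ j, wA j := by
    have h : ∑ _j : Fin n, wlo ≤ ∑ j, wA j := Finset.sum_le_sum fun j _ => (hbA j).1
    rwa [Finset.sum_const, Finset.card_univ, Fintype.card_fin, nsmul_eq_mul] at h
  have hSB_le : ∑ j, wB j ≤ (n : ℝ) * whi := by
    calc ∑ j, wB j ≤ ∑ _j : Fin n, whi := Finset.sum_le_sum fun j _ => (hbB j).2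
      _ = (n : ℝ) * whi := by
        rw [Finset.sum_const, Finset.card_univ, Fintype.card_fin, nsmul_eq_mul]
  have hSB_ge : (n : ℝ) * wlo ≤ ∑ j, wB j := by
    have h : ∑ _j : Fin n, wlo ≤ ∑ j, wB j := Finset.sum_le_sum fun j _ => (hbB j).1
    rwa [Finset.sum_const, Finset.card_univ, Fintype.card_fin, nsmul_eq_mul] at h
  have hratio1 : ∀ j, ρ * nv wB j ≤ nv wA j := by
    intro j
    rw [hρdef]
    unfold nv
    exact ratio_bound wlo whi (wA j) (wB j) _ _ n hwlo hwhi (hbA j).1 (hbB j).2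
      (hwB j) hSA hSB hSA_le hSB_ge
  have hratio2 : ∀ j, ρ * nv wA j ≤ nv wB j := by
    intro j
    rw [hρdef]
    unfold nv
    exact ratio_bound wlo whi (wB j) (wA j) _ _ n hwlo hwhi (hbB j).1 (hbA j).2
      (hwA j) hSB hSA hSB_le hSA_ge
  -- sum comparisons
  have hcomp1 : ρ * T1 ≤ S1 := by
    rw [hT1def, hS1def, Finset.mul_sum]
    exact Finset.sum_le_sum fun j _ =>
      compA ρ (nv wA j) (nv wB j) hρpos.le (hvA j) (hvB j) (hratio2 j)
  have hcomp2 : ρ * T2 ≤ S2 := by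
    rw [hT2def, hS2def, Finset.mul_sum]
    exact Finset.sum_le_sum fun j _ =>
      compB ρ (nv wA j) (nv wB j) hρpos.le (hvA j) (hvB j) (hratio2 j)
  have hcomp3 : ρ * S1 ≤ T1 := by
    rw [hT1def, hS1def, Finset.mul_sum]
    exact Finset.sum_le_sum fun j _ =>
      compB ρ (nv wB j) (nv wA j) hρpos.le (hvB j) (hvA j) (hratio1 j)
  have hcomp4 : ρ * S2 ≤ T2 := by
    rw [hT2def, hS2def, Finset.mul_sum]
    exact Finset.sum_le_sum fun j _ =>
      compA ρ (nv wB j) (nv wA j) hρpos.le (hvB j) (hvA j) (hratio1 j)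
  -- the key identity
  have hdag : XA * γ * (γ ^ 2 * S1 + S2) = XB * (γ ^ 2 * T1 + T2) := by
    have h1 : γ ^ 2 * (T1 + (γ ^ 2)⁻¹ * T2) = γ ^ 2 * T1 + T2 := by
      rw [mul_add, mul_inv_cancel_left₀ (by positivity : (γ:ℝ) ^ 2 ≠ 0)]
    calc XA * γ * (γ ^ 2 * S1 + S2)
        = XA * γ * (2 * XB * lamA XB wA wB γ) := by rw [hnum]
      _ = XA * γ * (2 * XB * (γ * lamB XA wA wB γ)) := by rw [hlam]
      _ = XB * (γ ^ 2 * (2 * XA * lamB XA wA wB γ)) := by ring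
      _ = XB * (γ ^ 2 * (T1 + (γ ^ 2)⁻¹ * T2)) := by rw [hden]
      _ = XB * (γ ^ 2 * T1 + T2) := by rw [h1]
  have hmix : 0 < ρ * γ ^ 2 * T1 + S2 := by
    rcases hcases with ⟨h1, _⟩ | ⟨h1, _⟩
    · exact add_pos_of_pos_of_nonneg
        (mul_pos (mul_pos hρpos (pow_pos hγ 2)) h1) hS2nn
    · exact add_pos_of_nonneg_of_pos
        (mul_nonneg (mul_nonneg hρpos.le (sq_nonneg γ)) hT1nn) h1
  have hmix2 : 0 < γ ^ 2 * T1 + ρ * S2 := by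
    rcases hcases with ⟨h1, _⟩ | ⟨h1, _⟩
    · exact add_pos_of_pos_of_nonneg (mul_pos (pow_pos hγ 2) h1)
        (mul_nonneg hρpos.le hS2nn)
    · exact add_pos_of_nonneg_of_pos (mul_nonneg (sq_nonneg γ) hT1nn)
        (mul_pos hρpos h1)
  -- upper bound on γ
  have hγup : γ * (XA * ρ) ≤ XB :=
    gamma_upper XA XB γ ρ S1 S2 T1 T2 hγ hρpos hXA hXB hdag hcomp1 hcomp2 hmix
  -- lower bound on γ
  have hγlo : ρ * XA ≤ γ * XB :=
    gamma_lower XA XB γ ρ S1 S2 T1 T2 hγ hρpos hXA hXB hXAB hdag hcomp3 hcomp4 hmix2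
  -- bounds on atom at 0
  have hAzero : ∀ j, P {ω | a j ω = 0} ≤ ENNReal.ofReal D := by
    intro j
    have hm : P {ω | a j ω = 0} ≤ P {ω | a j ω ≤ 0} :=
      measure_mono (fun ω h => le_of_eq h)
    rw [hFa j 0] at hm
    refine hm.trans (ENNReal.ofReal_le_ofReal ?_)
    unfold FAstar
    rw [if_neg (lt_irrefl 0)]
    by_cases hj : j ∈ OmegaA wA wB γ
    · rw [if_pos hj, zero_mul, zero_div]
      calc min 0 1 = 0 := by norm_num
        _ ≤ D := hDpos.le
    · rw [if_neg hj, zero_mul, zero_div, add_zero]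
      refine (min_le_left _ _).trans ?_
      have h1 : nv wA j * lamB XA wA wB γ / (nv wB j * lamA XB wA wB γ)
          = nv wA j / (nv wB j * γ) := by
        rw [hlam]
        rw [show nv wB j * (γ * lamB XA wA wB γ)
            = nv wB j * γ * lamB XA wA wB γ from by ring]
        rw [mul_div_mul_right _ _ hlamBpos.ne']
      rw [h1]
      refine le_trans ?_ (le_max_left _ _)
      have h2 : ρ ^ 2 * XA / XB ≤ nv wA j / (nv wB j * γ) :=
        zero_bound_A ρ XA XB γ (nv wA j) (nv wB j) hρpos hXA hXB hγ (hvA j) (hvB j)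
          hγup (hratio1 j)
      linarith
  have hBzero : ∀ j, P {ω | b j ω = 0} ≤ ENNReal.ofReal D := by
    intro j
    have hm : P {ω | b j ω = 0} ≤ P {ω | b j ω ≤ 0} :=
      measure_mono (fun ω h => le_of_eq h)
    rw [hFb j 0] at hm
    refine hm.trans (ENNReal.ofReal_le_ofReal ?_)
    unfold FBstar
    rw [if_neg (lt_irrefl 0)]
    by_cases hj : j ∈ OmegaA wA wB γ
    · rw [if_pos hj, zero_mul, zero_div, add_zero]
      refine (min_le_left _ _).trans ?_
      have h1 : nv wB j * lamA XB wA wB γ / (nv wA j * lamB XA wA wB γ)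
          = nv wB j * γ / nv wA j := by
        rw [hlam]
        rw [show nv wB j * (γ * lamB XA wA wB γ)
            = nv wB j * γ * lamB XA wA wB γ from by ring]
        rw [mul_div_mul_right _ _ hlamBpos.ne']
      rw [h1]
      refine le_trans ?_ (le_max_left _ _)
      have h2 : ρ ^ 2 * XA / XB ≤ nv wB j * γ / nv wA j :=
        zero_bound_B ρ XA XB γ (nv wA j) (nv wB j) hρpos hXA hXB hγ (hvA j) (hvB j)
          hγlo (hratio2 j)
      linarith
    · rw [if_neg hj, zero_mul, zero_div]
      calc min 0 1 = 0 := by norm_num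
        _ ≤ D := hDpos.le
  exact ⟨claim3 XA hXA a ha hindA haePosA hAzero,
    claim3 XB hXB b hb hindB haePosB hBzero⟩
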